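/- Two subspaces A, B ∈ Σ lie in the same orbit of P (that is, there exists g ∈ P with g(A) = B) if and only if they have the same J-indicator, i.e., dim(A ∩ J) = dim(B ∩ J). -/

import Mathlib

open QuadraticMap Module Submodule

namespace SigmaOrbitAux

variable {F W : Type*} [Field F] [AddCommGroup W] [Module F W]

section Basic
variable (Q : QuadraticForm F W)

theorem q_add' (x y : W) : Q (x + y) = Q x + Q y + polar (⇑Q) x y := by
  simp [QuadraticMap.polar]

theorem polar_sum_right' (x : W) {ι : Type*} (s : Finset ι) (y : ι → W) :
    polar (⇑Q) x (∑ i ∈ s, y i) = ∑ i ∈ s, polar (⇑Q) x (y i) := by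
  simpa only [polarBilin_apply_apply] using map_sum (Q.polarBilin x) y s

theorem polar_sum_left' (x : W) {ι : Type*} (s : Finset ι) (y : ι → W) :
    polar (⇑Q) (∑ i ∈ s, y i) x = ∑ i ∈ s, polar (⇑Q) (y i) x := by
  rw [polar_comm]
  rw [polar_sum_right']
  exact Finset.sum_congr rfl fun i _ => polar_comm _ _ _

variable [CharP F 2]

theorem addself_F (c : F) : c + c = 0 := by
  have h2 : (2 : F) = 0 := by exact_mod_cast CharP.cast_eq_zero F 2
  calc c + c = 2 * c := by ring
  _ = 0 := by rw [h2, zero_mul]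

theorem addself_W (Q : QuadraticForm F W) (x : W) : x + x = 0 := by
  have h2 : (2 : F) = 0 := by exact_mod_cast CharP.cast_eq_zero F 2
  calc x + x = (2 : F) • x := by rw [two_smul]
  _ = 0 := by rw [h2, zero_smul]

theorem polar_self' (x : W) : polar (⇑Q) x x = 0 := by
  unfold QuadraticMap.polar
  rw [addself_W Q, QuadraticMap.map_zero]
  have := addself_F (Q x)
  linear_combination -this

theorem q_span_zero {ι : Type*} (v : ι → W) (hq : ∀ i, Q (v i) = 0)
    (hp : ∀ i k, polar (⇑Q) (v i) (v k) = 0) (d : ι → F) (s : Finset ι) :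
    Q (∑ i ∈ s, d i • v i) = 0 := by
  classical
  induction s using Finset.induction with
  | empty => simp
  | insert _ _ h ih =>
      rename_i a s
      rw [Finset.sum_insert h, q_add', ih]
      rw [QuadraticMap.map_smul, hq, polar_smul_left, polar_sum_right']
      have : ∀ i ∈ s, polar (⇑Q) (v a) (d i • v i) = 0 := by
        intro i _
        rw [polar_smul_right, hp, smul_zero]
      rw [Finset.sum_congr rfl this]
      simp

end Basic

/-- The index type of a frame: `jn` indices for the `J`-part of `A`,
`m` indices for the rest of the singular part, one index for the
nonsingular vector. -/
abbrev Idx (jn m : ℕ) := Fin jn ⊕ (Fin m ⊕ Unit)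

/-- The spanning family of `A` associated to a frame. -/
def av {jn m : ℕ} (e f : Idx jn m → W) : Idx jn m → W
  | Sum.inl i => e (Sum.inl i)
  | Sum.inr (Sum.inl i) => f (Sum.inr (Sum.inl i))
  | Sum.inr (Sum.inr u) => e (Sum.inr (Sum.inr u)) + f (Sum.inr (Sum.inr u))

/-- A hyperbolic frame adapted to `J` and `A`. -/
structure Frame (Q : QuadraticForm F W) (J A : Submodule F W) (jn m : ℕ) where
  e : Idx jn m → W
  f : Idx jn m → W
  spanJ : span F (Set.range e) = J
  qf : ∀ k, Q (f k) = 0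
  pff : ∀ k l, polar (⇑Q) (f k) (f l) = 0
  pef : ∀ i k, polar (⇑Q) (e i) (f k) = if i = k then (1:F) else 0
  spanA : span F (Set.range (av e f)) = A

section Glue

variable [CharP F 2] [FiniteDimensional F W]
variable {Q : QuadraticForm F W} {J A B : Submodule F W} {n jn m : ℕ}

theorem frame_q_sum (hQJ : ∀ x ∈ J, Q x = 0) (Fr : Frame Q J A jn m)
    (c : Idx jn m ⊕ Idx jn m → F) :
    Q (∑ k, c k • Sum.elim Fr.e Fr.f k) =
      ∑ i : Idx jn m, c (Sum.inl i) * c (Sum.inr i) := by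
  classical
  have hej : ∀ i, Fr.e i ∈ J := fun i =>
    (le_of_eq Fr.spanJ) (subset_span (Set.mem_range_self i))
  have hpee : ∀ i k, polar (⇑Q) (Fr.e i) (Fr.e k) = 0 := by
    intro i k
    unfold QuadraticMap.polar
    rw [hQJ _ (J.add_mem (hej i) (hej k)), hQJ _ (hej i), hQJ _ (hej k)]
    ring
  have hqe : ∀ i, Q (Fr.e i) = 0 := fun i => hQJ _ (hej i)
  rw [Fintype.sum_sum_type]
  simp only [Sum.elim_inl, Sum.elim_inr]
  set p := ∑ i : Idx jn m, c (Sum.inl i) • Fr.e i with hp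
  set q := ∑ i : Idx jn m, c (Sum.inr i) • Fr.f i with hq
  rw [q_add']
  rw [q_span_zero Q Fr.e hqe hpee]
  rw [q_span_zero Q Fr.f Fr.qf Fr.pff]
  rw [hp, hq, polar_sum_left']
  have : ∀ i ∈ Finset.univ (α := Idx jn m),
      polar (⇑Q) (c (Sum.inl i) • Fr.e i) q =
        c (Sum.inl i) * c (Sum.inr i) := by
    intro i _
    rw [polar_smul_left, hq, polar_sum_right']
    have : ∀ k ∈ Finset.univ (α := Idx jn m),
        polar (⇑Q) (Fr.e i) (c (Sum.inr k) • Fr.f k) =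
          if k = i then c (Sum.inr k) else 0 := by
      intro k _
      rw [polar_smul_right, Fr.pef]
      by_cases h : i = k
      · subst h; simp
      · simp [h, Ne.symm h]
    rw [Finset.sum_congr rfl this]
    simp [smul_eq_mul]
  rw [Finset.sum_congr rfl this]
  ring

theorem frame_glue (hW : finrank F W = 2 * n) (hc : jn + m + 1 = n)
    (hQJ : ∀ x ∈ J, Q x = 0)
    (FA : Frame Q J A jn m) (FB : Frame Q J B jn m) :
    ∃ g : W ≃ₗ[F] W, (∀ x : W, Q (g x) = Q x) ∧
      Submodule.map (g : W →ₗ[F] W) J = J ∧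
      Submodule.map (g : W →ₗ[F] W) A = B := by
  classical
  have indep : ∀ (C : Submodule F W) (Fr : Frame Q J C jn m),
      LinearIndependent F (Sum.elim Fr.e Fr.f) := by
    intro C Fr
    have hej : ∀ i, Fr.e i ∈ J := fun i =>
      (le_of_eq Fr.spanJ) (subset_span (Set.mem_range_self i))
    have hpee : ∀ i k, polar (⇑Q) (Fr.e i) (Fr.e k) = 0 := by
      intro i k
      unfold QuadraticMap.polar
      rw [hQJ _ (J.add_mem (hej i) (hej k)), hQJ _ (hej i), hQJ _ (hej k)]
      ring
    rw [Fintype.linearIndependent_iff]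
    intro c hc
    have hzero_left : ∀ i₀ : Idx jn m, c (Sum.inl i₀) = 0 := by
      intro i₀
      have h1 := congrArg (fun w => polar (⇑Q) w (Fr.f i₀)) hc
      rw [polar_sum_left'] at h1
      have h2 : ∀ k ∈ Finset.univ (α := Idx jn m ⊕ Idx jn m),
          polar (⇑Q) (c k • Sum.elim Fr.e Fr.f k) (Fr.f i₀) =
            if k = Sum.inl i₀ then c k else 0 := by
        intro k _
        rcases k with i | l
        · simp only [Sum.elim_inl]
          rw [polar_smul_left, Fr.pef]
          by_cases h : i = i₀ <;> simp [h]
        · simp only [Sum.elim_inr]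
          rw [polar_smul_left, Fr.pff]
          simp
      rw [Finset.sum_congr rfl h2, Finset.sum_ite_eq' Finset.univ (Sum.inl i₀) c] at h1
      simpa [QuadraticMap.polar] using h1
    have hzero_right : ∀ i₀ : Idx jn m, c (Sum.inr i₀) = 0 := by
      intro i₀
      have h1 := congrArg (fun w => polar (⇑Q) (Fr.e i₀) w) hc
      rw [polar_sum_right'] at h1
      have h2 : ∀ k ∈ Finset.univ (α := Idx jn m ⊕ Idx jn m),
          polar (⇑Q) (Fr.e i₀) (c k • Sum.elim Fr.e Fr.f k) =
            if k = Sum.inr i₀ then c k else 0 := by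
        intro k _
        rcases k with i | l
        · simp only [Sum.elim_inl]
          rw [polar_smul_right, hpee]
          simp
        · simp only [Sum.elim_inr]
          rw [polar_smul_right, Fr.pef]
          by_cases h : i₀ = l
          · simp [h]
          · simp [h, Ne.symm h]
      rw [Finset.sum_congr rfl h2, Finset.sum_ite_eq' Finset.univ (Sum.inr i₀) c] at h1
      simpa [QuadraticMap.polar] using h1
    intro k
    rcases k with i | i
    · exact hzero_left i
    · exact hzero_right i
  haveI : Nonempty (Idx jn m ⊕ Idx jn m) := ⟨Sum.inl (Sum.inr (Sum.inr ()))⟩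
  have hcard : Fintype.card (Idx jn m ⊕ Idx jn m) = finrank F W := by
    simp [hW]
    omega
  let bA := basisOfLinearIndependentOfCardEqFinrank (indep A FA) hcard
  let bB := basisOfLinearIndependentOfCardEqFinrank (indep B FB) hcard
  have hbA : ⇑bA = Sum.elim FA.e FA.f :=
    coe_basisOfLinearIndependentOfCardEqFinrank _ _
  have hbB : ⇑bB = Sum.elim FB.e FB.f :=
    coe_basisOfLinearIndependentOfCardEqFinrank _ _
  have hg : ∀ k, (bA.equiv bB (Equiv.refl _)) (Sum.elim FA.e FA.f k) =
      Sum.elim FB.e FB.f k := by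
    intro k
    have h1 : Sum.elim FA.e FA.f k = bA k := by rw [hbA]
    rw [h1, Basis.equiv_apply, hbB]
    rfl
  set g := bA.equiv bB (Equiv.refl _) with hgdef
  refine ⟨g, ?_, ?_, ?_⟩
  · intro x
    have hx := bA.sum_repr x
    set c : Idx jn m ⊕ Idx jn m → F := ⇑(bA.repr x) with hcdef
    have hxA : x = ∑ k, c k • Sum.elim FA.e FA.f k := by
      rw [← hx]
      exact Finset.sum_congr rfl fun k _ => by rw [hbA]
    have hgx : g x = ∑ k, c k • Sum.elim FB.e FB.f k := by
      rw [hxA, map_sum]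
      exact Finset.sum_congr rfl fun k _ => by rw [LinearEquiv.map_smul, hg]
    rw [hgx]
    conv_rhs => rw [hxA]
    rw [frame_q_sum hQJ FA c, frame_q_sum hQJ FB c]
  · conv_lhs => rw [← FA.spanJ]
    rw [Submodule.map_span, ← Set.range_comp]
    have : (g : W →ₗ[F] W) ∘ FA.e = FB.e := funext fun i => hg (Sum.inl i)
    rw [this, FB.spanJ]
  · conv_lhs => rw [← FA.spanA]
    rw [Submodule.map_span, ← Set.range_comp]
    have : (g : W →ₗ[F] W) ∘ av FA.e FA.f = av FB.e FB.f := by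
      funext k
      rcases k with i | k
      · exact hg (Sum.inl (Sum.inl i))
      · rcases k with i | u
        · exact hg (Sum.inr (Sum.inr (Sum.inl i)))
        · show g (FA.e _ + FA.f _) = _
          rw [map_add]
          have h1 := hg (Sum.inl (Sum.inr (Sum.inr u)))
          have h2 := hg (Sum.inr (Sum.inr (Sum.inr u)))
          simp only [Sum.elim_inl, Sum.elim_inr] at h1 h2
          rw [h1, h2]
          rfl
    rw [this, FB.spanA]

end Glue

section Exists

variable [PerfectField F] [CharP F 2] [FiniteDimensional F W]

theorem exists_frame {n jn m : ℕ} (hW : finrank F W = 2 * n)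
    (Q : QuadraticForm F W)
    (hnd : ∀ x : W, (∀ y : W, polar (⇑Q) x y = 0) → x = 0)
    (J K : Submodule F W) (hJK : IsCompl J K)
    (hJ : finrank F J = n) (hK : finrank F K = n)
    (hQJ : ∀ x ∈ J, Q x = 0) (hQK : ∀ x ∈ K, Q x = 0)
    (A : Submodule F W)
    (hAn : finrank F A = n)
    (hApolar : ∀ x ∈ A, ∀ y ∈ A, polar (⇑Q) x y = 0)
    (S : Submodule F W) (hSset : (S : Set W) = {x : W | x ∈ A ∧ Q x = 0})
    (hSrank : finrank F S + 1 = finrank F A)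
    (hjn : finrank F (A ⊓ J : Submodule F W) = jn)
    (hm : jn + m + 1 = n) :
    Nonempty (Frame Q J A jn m) := by
  classical
  have polarJ : ∀ x ∈ J, ∀ y ∈ J, polar (⇑Q) x y = 0 := by
    intro x hx y hy
    unfold QuadraticMap.polar
    rw [hQJ _ (J.add_mem hx hy), hQJ _ hx, hQJ _ hy]; ring
  have polarK : ∀ x ∈ K, ∀ y ∈ K, polar (⇑Q) x y = 0 := by
    intro x hx y hy
    unfold QuadraticMap.polar
    rw [hQK _ (K.add_mem hx hy), hQK _ hx, hQK _ hy]; ring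
  have hmem : ∀ x : W, x ∈ S ↔ x ∈ A ∧ Q x = 0 := by
    intro x
    constructor
    · intro hx
      have h : x ∈ (S : Set W) := hx
      rw [hSset] at h; exact h
    · intro hx
      show x ∈ (S : Set W)
      rw [hSset]; exact hx
  have hSA : S ≤ A := fun x hx => ((hmem x).1 hx).1
  have hAJS : A ⊓ J ≤ S := fun x hx => (hmem x).2 ⟨hx.1, hQJ x hx.2⟩
  have hSr : finrank F S = jn + m := by omega
  -- choice of the nonsingular vector `a` with `Q a = 1`
  obtain ⟨x0, hx0A, hx0S⟩ : ∃ x0 ∈ A, x0 ∉ S := by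
    refine SetLike.exists_of_lt (lt_of_le_of_ne hSA fun h => ?_)
    rw [h] at hSr; omega
  have hQx0 : Q x0 ≠ 0 := fun h => hx0S ((hmem x0).2 ⟨hx0A, h⟩)
  obtain ⟨t, ht⟩ := surjective_frobenius F 2 (Q x0)⁻¹
  set a := t • x0 with ha_def
  have haA : a ∈ A := A.smul_mem _ hx0A
  have hQa : Q a = 1 := by
    rw [ha_def, QuadraticMap.map_smul, smul_eq_mul]
    have h2 : t * t = (Q x0)⁻¹ := by
      rw [frobenius_def] at ht
      calc t * t = t ^ 2 := by ring
      _ = _ := ht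
    rw [h2, inv_mul_cancel₀ hQx0]
  have haS : a ∉ S := by
    intro h
    have h1 := ((hmem a).1 h).2
    rw [hQa] at h1
    exact one_ne_zero h1
  -- complement U of A ⊓ J inside S
  obtain ⟨U', hU'⟩ := Submodule.exists_isCompl (Submodule.comap S.subtype (A ⊓ J))
  set U : Submodule F W := Submodule.map S.subtype U' with hU_def
  have hUS : U ≤ S := by
    rw [hU_def]
    rintro x ⟨y, _, rfl⟩
    exact y.2
  have h1 : Submodule.map S.subtype (Submodule.comap S.subtype (A ⊓ J)) = A ⊓ J := by
    rw [Submodule.map_comap_subtype]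
    exact inf_eq_right.mpr hAJS
  have hsup : (A ⊓ J) ⊔ U = S := by
    rw [← h1, hU_def, ← Submodule.map_sup, hU'.codisjoint.eq_top, Submodule.map_subtype_top]
  have hdisj : Disjoint (A ⊓ J) U := by
    rw [disjoint_iff_inf_le]
    rintro x ⟨hxAJ, hxU⟩
    rw [hU_def] at hxU
    obtain ⟨y, hyU', hyx⟩ := hxU
    subst hyx
    have hyc : y ∈ Submodule.comap S.subtype (A ⊓ J) := hxAJ
    have hy0 : y = 0 := by
      have := hU'.disjoint.le_bot (Submodule.mem_inf.2 ⟨hyc, hyU'⟩)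
      simpa using this
    show S.subtype y ∈ (⊥ : Submodule F W)
    rw [hy0]
    simp
  have hUrank : finrank F U = m := by
    have h2 := Submodule.finrank_sup_add_finrank_inf_eq (A ⊓ J) U
    rw [hsup, hdisj.eq_bot, finrank_bot, hjn, hSr] at h2
    omega
  -- basis of U
  let bU := finBasisOfFinrankEq F U hUrank
  let u : Fin m → W := fun i => ↑(bU i)
  have huU : ∀ i, u i ∈ U := fun i => (bU i).2
  have huS : ∀ i, u i ∈ S := fun i => hUS (huU i)
  have huA : ∀ i, u i ∈ A := fun i => hSA (huS i)
  have huQ : ∀ i, Q (u i) = 0 := fun i => ((hmem _).1 (huS i)).2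
  have hu_li : LinearIndependent F u :=
    bU.linearIndependent.map' U.subtype (Submodule.ker_subtype U)
  have hu_span : span F (Set.range u) = U := by
    have h3 : u = (U.subtype : ↥U →ₗ[F] W) ∘ bU := rfl
    rw [h3, Set.range_comp, ← Submodule.map_span, bU.span_eq, Submodule.map_subtype_top]
  -- the singular part family of A beyond A ⊓ J, with the special vector a
  set v : Fin m ⊕ Unit → W := Sum.elim u (fun _ => a) with hv_def
  have hvA : ∀ k, v k ∈ A := by rintro (i | u0); exacts [huA i, haA]
  -- independence of K-projections of v
  let πK := Submodule.linearProjOfIsCompl K J hJK.symm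
  have hvK_li : LinearIndependent F (fun k => πK (v k)) := by
    rw [Fintype.linearIndependent_iff]
    intro lam hlam
    have hx : πK (∑ k, lam k • v k) = 0 := by
      rw [map_sum]
      have hsm : ∀ k ∈ Finset.univ, πK (lam k • v k) = lam k • πK (v k) :=
        fun k _ => πK.map_smul _ _
      rw [Finset.sum_congr rfl hsm]
      exact hlam
    have hxJ : (∑ k, lam k • v k) ∈ J :=
      (Submodule.linearProjOfIsCompl_apply_eq_zero_iff hJK.symm).1 hx
    have hxA : (∑ k, lam k • v k) ∈ A := sum_mem fun k _ => A.smul_mem _ (hvA k)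
    have hsplit : (∑ k, lam k • v k) =
        (∑ i : Fin m, lam (Sum.inl i) • u i) + lam (Sum.inr ()) • a := by
      rw [Fintype.sum_sum_type]
      simp [hv_def]
    have hlam1 : lam (Sum.inr ()) = 0 := by
      by_contra hne
      apply haS
      have huSum : (∑ i : Fin m, lam (Sum.inl i) • u i) ∈ S :=
        sum_mem fun i _ => S.smul_mem _ (huS i)
      have h3 : lam (Sum.inr ()) • a =
          (∑ k, lam k • v k) - (∑ i : Fin m, lam (Sum.inl i) • u i) := by
        rw [hsplit]; abel
      have hS3 : lam (Sum.inr ()) • a ∈ S := by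
        rw [h3]
        exact S.sub_mem (hAJS ⟨hxA, hxJ⟩) huSum
      have h4 := S.smul_mem (lam (Sum.inr ()))⁻¹ hS3
      rwa [smul_smul, inv_mul_cancel₀ hne, one_smul] at h4
    have hxU : (∑ i : Fin m, lam (Sum.inl i) • u i) ∈ U :=
      sum_mem fun i _ => U.smul_mem _ (huU i)
    have hx0 : (∑ i : Fin m, lam (Sum.inl i) • u i) = 0 := by
      have h5 : (∑ k, lam k • v k) = ∑ i : Fin m, lam (Sum.inl i) • u i := by
        rw [hsplit, hlam1, zero_smul, add_zero]
      have hmemAJ : (∑ i : Fin m, lam (Sum.inl i) • u i) ∈ A ⊓ J :=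
        ⟨h5 ▸ hxA, h5 ▸ hxJ⟩
      have := hdisj.le_bot (Submodule.mem_inf.2 ⟨hmemAJ, hxU⟩)
      simpa using this
    rintro (i | u0)
    · exact (Fintype.linearIndependent_iff.1 hu_li) _ hx0 i
    · cases u0; exact hlam1
  -- dual functionals on K to the projections of v
  obtain ⟨C, hC⟩ := Submodule.exists_isCompl (span F (Set.range fun k => πK (v k)))
  let bspan := Basis.span hvK_li
  let proj2 := Submodule.linearProjOfIsCompl _ C hC
  let ξ : (Fin m ⊕ Unit) → Module.Dual F ↥K := fun k => (bspan.coord k).comp proj2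
  have hξ : ∀ k l, ξ k (πK (v l)) = if l = k then 1 else 0 := by
    intro k l
    have hmemspan : πK (v l) ∈ span F (Set.range fun k => πK (v k)) :=
      subset_span ⟨l, rfl⟩
    have h6 : proj2 (πK (v l)) = ⟨πK (v l), hmemspan⟩ :=
      Submodule.linearProjOfIsCompl_apply_left hC ⟨_, hmemspan⟩
    have h7 : (⟨πK (v l), hmemspan⟩ : ↥(span F (Set.range fun k => πK (v k)))) = bspan l :=
      (Basis.span_apply hvK_li l).symm
    show (bspan.coord k) (proj2 (πK (v l))) = _
    rw [h6, h7, Basis.coord_apply, bspan.repr_self, Finsupp.single_apply]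
  -- transfer the dual functionals to elements of J
  let ΦJ : ↥J →ₗ[F] ↥K →ₗ[F] F := Q.polarBilin.domRestrict₁₂ J K
  have hΦJ_inj : Function.Injective ΦJ := by
    rw [← LinearMap.ker_eq_bot, Submodule.eq_bot_iff]
    intro x hx
    have hx' : ΦJ x = 0 := hx
    have hx0 : ∀ y : W, polar (⇑Q) (↑x) y = 0 := by
      intro y
      have hy : y ∈ J ⊔ K := by rw [hJK.sup_eq_top]; trivial
      obtain ⟨p, hp, q, hq, rfl⟩ := Submodule.mem_sup.1 hy
      rw [polar_add_right]
      have hpj : polar (⇑Q) (↑x) p = 0 := polarJ _ x.2 _ hp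
      have hqk : polar (⇑Q) (↑x) q = 0 := by
        have h := LinearMap.congr_fun hx' ⟨q, hq⟩
        simpa [ΦJ, LinearMap.domRestrict₁₂_apply] using h
      rw [hpj, hqk, add_zero]
    have := hnd _ hx0
    exact Subtype.ext this
  have hΦJ_surj : Function.Surjective ΦJ := by
    have hfr : finrank F ↥J = finrank F (↥K →ₗ[F] F) := by
      have hd : finrank F (Module.Dual F ↥K) = finrank F ↥K :=
        Subspace.dual_finrank_eq
      rw [hJ]
      exact (hd.trans hK).symm
    exact (LinearMap.injective_iff_surjective_of_finrank_eq_finrank hfr).1 hΦJ_inj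
  let E : (Fin m ⊕ Unit) → ↥J := fun k => (hΦJ_surj (ξ k)).choose
  have hE : ∀ k, ΦJ (E k) = ξ k := fun k => (hΦJ_surj (ξ k)).choose_spec
  have hpolar_vE : ∀ l k, polar (⇑Q) (v l) ↑(E k) = if l = k then 1 else 0 := by
    intro l k
    have hdec : ((J.linearProjOfIsCompl K hJK (v l) : W) + (K.linearProjOfIsCompl J hJK.symm (v l) : W)) = v l :=
      Submodule.projection_add_projection_eq_self hJK (v l)
    set πJ := J.linearProjOfIsCompl K hJK
    calc polar (⇑Q) (v l) ↑(E k)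
        = polar (⇑Q) ((↑(πJ (v l)) : W) + ↑(πK (v l))) ↑(E k) :=
          congrArg (fun z => polar (⇑Q) z ↑(E k)) hdec.symm
      _ = polar (⇑Q) (↑(πJ (v l)) : W) ↑(E k) + polar (⇑Q) (↑(πK (v l)) : W) ↑(E k) := by
          rw [polar_add_left]
      _ = 0 + polar (⇑Q) (↑(πK (v l)) : W) ↑(E k) := by
          rw [polarJ _ (πJ (v l)).2 _ (E k).2]
      _ = ξ k (πK (v l)) := by
          rw [zero_add]
          have h8 := LinearMap.congr_fun (hE k) (πK (v l))
          have h9 : polar (⇑Q) (↑(E k) : W) ↑(πK (v l)) = ξ k (πK (v l)) := by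
            simpa [ΦJ, LinearMap.domRestrict₁₂_apply] using h8
          rw [← h9, polar_comm]
      _ = if l = k then 1 else 0 := hξ k l
  -- the `e` family
  let b1 := finBasisOfFinrankEq F (A ⊓ J : Submodule F W) hjn
  let e1 : Fin jn → W := fun i => ↑(b1 i)
  have he1AJ : ∀ i, e1 i ∈ A ⊓ J := fun i => (b1 i).2
  have he1_li : LinearIndependent F e1 :=
    b1.linearIndependent.map' (A ⊓ J).subtype (Submodule.ker_subtype _)
  have he1_span : span F (Set.range e1) = A ⊓ J := by
    have h3 : e1 = ((A ⊓ J).subtype : ↥(A ⊓ J) →ₗ[F] W) ∘ b1 := rfl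
    rw [h3, Set.range_comp, ← Submodule.map_span, b1.span_eq, Submodule.map_subtype_top]
  set e : Idx jn m → W := Sum.elim e1 (fun k => ↑(E k)) with he_def
  have heJ : ∀ i, e i ∈ J := by
    rintro (i | k)
    · exact (he1AJ i).2
    · exact (E k).2
  have hpv_e : ∀ l (i : Idx jn m), polar (⇑Q) (v l) (e i) =
      if (Sum.inr l : Idx jn m) = i then 1 else 0 := by
    rintro l (i | k)
    · rw [he_def]
      simp only [Sum.elim_inl]
      rw [hApolar _ (hvA l) _ (he1AJ i).1]
      simp
    · rw [he_def]
      simp only [Sum.elim_inr]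
      rw [hpolar_vE l k]
      by_cases h : l = k
      · simp [h]
      · simp [h]
  have he_li : LinearIndependent F e := by
    rw [Fintype.linearIndependent_iff]
    intro c hc
    have hinr : ∀ l, c (Sum.inr l) = 0 := by
      intro l
      have h1 := congrArg (fun w => polar (⇑Q) (v l) w) hc
      rw [polar_sum_right'] at h1
      have h2 : ∀ k ∈ Finset.univ (α := Idx jn m),
          polar (⇑Q) (v l) (c k • e k) = if k = Sum.inr l then c k else 0 := by
        intro k _
        rw [polar_smul_right, hpv_e]
        by_cases h : (Sum.inr l : Idx jn m) = k
        · rw [if_pos h, if_pos h.symm]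
          simp
        · rw [if_neg h, if_neg (fun hh => h hh.symm)]
          simp
      rw [Finset.sum_congr rfl h2, Finset.sum_ite_eq' Finset.univ (Sum.inr l) c] at h1
      simpa [QuadraticMap.polar] using h1
    have hsum1 : (∑ i : Fin jn, c (Sum.inl i) • e1 i) = 0 := by
      have h3 := hc
      rw [Fintype.sum_sum_type] at h3
      have h4 : (∑ k : Fin m ⊕ Unit, c (Sum.inr k) • e (Sum.inr k)) = 0 :=
        Finset.sum_eq_zero fun k _ => by rw [hinr, zero_smul]
      rw [h4, add_zero] at h3
      rw [← h3]
      exact Finset.sum_congr rfl fun i _ => rfl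
    rintro (i | l)
    · exact (Fintype.linearIndependent_iff.1 he1_li) _ hsum1 i
    · exact hinr l
  have hcard_idx : Fintype.card (Idx jn m) = n := by
    simp [Idx]
    omega
  have he_span : span F (Set.range e) = J := by
    have hle : span F (Set.range e) ≤ J := span_le.2 (by rintro x ⟨k, rfl⟩; exact heJ k)
    refine Submodule.eq_of_le_of_finrank_le hle ?_
    rw [finrank_span_eq_card he_li, hJ, hcard_idx]
  let e' : Idx jn m → ↥J := fun k => ⟨e k, heJ k⟩
  have he'_li : LinearIndependent F e' := he_li.of_comp J.subtype
  have he'_spantop : span F (Set.range e') = ⊤ := by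
    apply Submodule.map_injective_of_injective (Submodule.injective_subtype J)
    rw [Submodule.map_subtype_top, Submodule.map_span, ← Set.range_comp]
    exact he_span
  let bJ : Basis (Idx jn m) F ↥J := Basis.mk he'_li (le_of_eq he'_spantop.symm)
  have hbJ : ∀ k, (bJ k : W) = e k := fun k => by rw [Basis.mk_apply]
  -- the dual vectors `w` inside `K`
  let ΦK : ↥K →ₗ[F] ↥J →ₗ[F] F := Q.polarBilin.domRestrict₁₂ K J
  have hΦK_inj : Function.Injective ΦK := by
    rw [← LinearMap.ker_eq_bot, Submodule.eq_bot_iff]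
    intro x hx
    have hx' : ΦK x = 0 := hx
    have hx0 : ∀ y : W, polar (⇑Q) (↑x) y = 0 := by
      intro y
      have hy : y ∈ J ⊔ K := by rw [hJK.sup_eq_top]; trivial
      obtain ⟨p, hp, q, hq, rfl⟩ := Submodule.mem_sup.1 hy
      rw [polar_add_right]
      have hpj : polar (⇑Q) (↑x) p = 0 := by
        have h := LinearMap.congr_fun hx' ⟨p, hp⟩
        simpa [ΦK, LinearMap.domRestrict₁₂_apply] using h
      have hqk : polar (⇑Q) (↑x) q = 0 := polarK _ x.2 _ hq
      rw [hpj, hqk, add_zero]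
    exact Subtype.ext (hnd _ hx0)
  have hΦK_surj : Function.Surjective ΦK := by
    have hfr : finrank F ↥K = finrank F (↥J →ₗ[F] F) := by
      have hd : finrank F (Module.Dual F ↥J) = finrank F ↥J :=
        Subspace.dual_finrank_eq
      rw [hK]
      exact (hd.trans hJ).symm
    exact (LinearMap.injective_iff_surjective_of_finrank_eq_finrank hfr).1 hΦK_inj
  let w : Fin jn → W := fun k => ↑((hΦK_surj (bJ.coord (Sum.inl k))).choose)
  have hwK : ∀ k, (w k) ∈ K := fun k => ((hΦK_surj (bJ.coord (Sum.inl k))).choose).2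
  have hw : ∀ k (i : Idx jn m), polar (⇑Q) (w k) (e i) = if i = Sum.inl k then 1 else 0 := by
    intro k i
    have h8 := LinearMap.congr_fun ((hΦK_surj (bJ.coord (Sum.inl k))).choose_spec) ⟨e i, heJ i⟩
    have h9 : polar (⇑Q) (w k) (e i) = bJ.coord (Sum.inl k) ⟨e i, heJ i⟩ := by
      simpa [ΦK, LinearMap.domRestrict₁₂_apply] using h8
    rw [h9]
    have h10 : (⟨e i, heJ i⟩ : ↥J) = bJ i := Subtype.ext (hbJ i).symm
    rw [h10, Basis.coord_apply, bJ.repr_self, Finsupp.single_apply]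
  -- the `f` family, part 2/3
  set eend : W := ↑(E (Sum.inr ())) with heend_def
  set f2 : Fin m ⊕ Unit → W := Sum.elim u (fun _ => a + eend) with hf2_def
  have hpae : polar (⇑Q) a eend = 1 := by
    have h11 := hpolar_vE (Sum.inr ()) (Sum.inr ())
    rw [if_pos rfl] at h11
    rw [heend_def, ← h11, hv_def]
    rfl
  have hf2Q : ∀ k, Q (f2 k) = 0 := by
    rintro (i | u0)
    · exact huQ i
    · show Q (a + eend) = 0
      rw [q_add', hQa, hQJ _ (E (Sum.inr ())).2, hpae]
      calc (1:F) + 0 + 1 = 1 + 1 := by ring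
      _ = 0 := addself_F 1
  have hpue : ∀ i, polar (⇑Q) (u i) ↑(E (Sum.inr ())) = 0 := by
    intro i
    have h12 := hpolar_vE (Sum.inl i) (Sum.inr ())
    rw [if_neg (by simp)] at h12
    rw [← h12, hv_def]
    rfl
  have hf2p : ∀ k l, polar (⇑Q) (f2 k) (f2 l) = 0 := by
    have hua : ∀ i, polar (⇑Q) (u i) (a + eend) = 0 := by
      intro i
      rw [polar_add_right, hApolar _ (huA i) _ haA, heend_def, hpue i]
      ring
    rintro (i | u0) (l | u1)
    · exact hApolar _ (huA i) _ (huA l)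
    · exact hua i
    · rw [polar_comm]; exact hua l
    · exact polar_self' Q _
  have hef2 : ∀ (i : Idx jn m) l, polar (⇑Q) (e i) (f2 l) =
      if i = Sum.inr l then 1 else 0 := by
    rintro i (l | u0)
    · show polar (⇑Q) (e i) (u l) = _
      rw [polar_comm]
      have h13 := hpv_e (Sum.inl l) i
      rw [hv_def] at h13
      simp only [Sum.elim_inl] at h13
      rw [h13]
      by_cases h : i = Sum.inr (Sum.inl l)
      · rw [if_pos h.symm, if_pos h]
      · rw [if_neg (fun hh => h hh.symm), if_neg h]
    · show polar (⇑Q) (e i) (a + eend) = _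
      rw [polar_add_right]
      have h14 : polar (⇑Q) (e i) a = if i = Sum.inr (Sum.inr ()) then 1 else 0 := by
        rw [polar_comm]
        have h15 := hpv_e (Sum.inr ()) i
        rw [hv_def] at h15
        simp only [Sum.elim_inr] at h15
        rw [h15]
        by_cases h : i = Sum.inr (Sum.inr ())
        · rw [if_pos h.symm, if_pos h]
        · rw [if_neg (fun hh => h hh.symm), if_neg h]
      rw [h14, heend_def, polarJ _ (heJ i) _ (E (Sum.inr ())).2, add_zero]
  -- the `f` family, part 1
  set z : Fin jn → W :=
    (fun k => ∑ l : Fin m ⊕ Unit, polar (⇑Q) (w k) (f2 l) • e (Sum.inr l)) with hz_def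
  have hzJ : ∀ k, z k ∈ J := fun k => sum_mem fun l _ => J.smul_mem _ (heJ (Sum.inr l))
  have hwe : ∀ k l, polar (⇑Q) (w k) (e (Sum.inr l)) = 0 := by
    intro k l
    rw [hw]
    simp
  have hwz : ∀ k k', polar (⇑Q) (w k) (z k') = 0 := by
    intro k k'
    rw [hz_def]
    simp only
    rw [polar_sum_right']
    apply Finset.sum_eq_zero
    intro l _
    rw [polar_smul_right, hwe, smul_zero]
  set f1 : Fin jn → W := (fun k => w k + z k) with hf1_def
  have hf1Q : ∀ k, Q (f1 k) = 0 := by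
    intro k
    rw [hf1_def]
    simp only
    rw [q_add', hQK _ (hwK k), hQJ _ (hzJ k), hwz]
    ring
  have hef1 : ∀ (i : Idx jn m) k, polar (⇑Q) (e i) (f1 k) =
      if i = Sum.inl k then 1 else 0 := by
    intro i k
    rw [hf1_def]
    simp only
    rw [polar_add_right, polarJ _ (heJ i) _ (hzJ k), add_zero, polar_comm, hw]
  have hzf2 : ∀ k l, polar (⇑Q) (z k) (f2 l) = polar (⇑Q) (w k) (f2 l) := by
    intro k l
    rw [hz_def]
    simp only
    rw [polar_sum_left']
    have h2 : ∀ l' ∈ Finset.univ (α := Fin m ⊕ Unit),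
        polar (⇑Q) (polar (⇑Q) (w k) (f2 l') • e (Sum.inr l')) (f2 l) =
          if l' = l then polar (⇑Q) (w k) (f2 l) else 0 := by
      intro l' _
      rw [polar_smul_left, hef2]
      by_cases h : l' = l
      · subst h; simp
      · rw [if_neg (by simpa using h), if_neg h, smul_zero]
    rw [Finset.sum_congr rfl h2, Finset.sum_ite_eq' Finset.univ l
      (fun _ => polar (⇑Q) (w k) (f2 l))]
    simp
  have hf1f2 : ∀ k l, polar (⇑Q) (f1 k) (f2 l) = 0 := by
    intro k l
    rw [hf1_def]
    simp only
    rw [polar_add_left, hzf2]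
    exact addself_F _
  have hf1f1 : ∀ k k', polar (⇑Q) (f1 k) (f1 k') = 0 := by
    intro k k'
    rw [hf1_def]
    simp only
    rw [polar_add_left, polar_add_right, polar_add_right]
    rw [polarK _ (hwK k) _ (hwK k'), hwz, polar_comm (⇑Q) (z k) (w k'), hwz,
      polarJ _ (hzJ k) _ (hzJ k')]
    ring
  set f : Idx jn m → W := Sum.elim f1 f2 with hf_def
  have hqf : ∀ k, Q (f k) = 0 := by
    rintro (k | l)
    · exact hf1Q k
    · exact hf2Q l
  have hpff : ∀ k l, polar (⇑Q) (f k) (f l) = 0 := by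
    rintro (k | l) (k' | l')
    · exact hf1f1 k k'
    · exact hf1f2 k l'
    · rw [polar_comm]; exact hf1f2 k' l
    · exact hf2p l l'
  have hpef : ∀ (i : Idx jn m) k, polar (⇑Q) (e i) (f k) =
      if i = k then (1:F) else 0 := by
    rintro i (k | l)
    · exact hef1 i k
    · exact hef2 i l
  -- the spanning property for A
  have hav1 : ∀ i, av e f (Sum.inl i) = e1 i := by
    intro i
    show e (Sum.inl i) = e1 i
    rw [he_def]
    rfl
  have hav2 : ∀ i, av e f (Sum.inr (Sum.inl i)) = u i := by
    intro i
    show f (Sum.inr (Sum.inl i)) = u i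
    rw [hf_def, hf2_def]
    rfl
  have hav3 : ∀ u0, av e f (Sum.inr (Sum.inr u0)) = a := by
    intro u0
    show e (Sum.inr (Sum.inr u0)) + f (Sum.inr (Sum.inr u0)) = a
    rw [he_def, hf_def, hf2_def]
    show eend + (a + eend) = a
    have h16 : eend + (a + eend) = (eend + eend) + a := by abel
    rw [h16, addself_W Q, zero_add]
  have hA_eq : S ⊔ span F {a} = A := by
    apply Submodule.eq_of_le_of_finrank_le
    · exact sup_le hSA ((Submodule.span_singleton_le_iff_mem a A).2 haA)
    · have hane : a ≠ 0 := by
        intro h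
        rw [h, QuadraticMap.map_zero] at hQa
        exact zero_ne_one hQa
      have hP : finrank F (span F {a} : Submodule F W) = 1 := finrank_span_singleton hane
      have hinf : S ⊓ span F {a} = ⊥ := by
        rw [eq_bot_iff]
        rintro x ⟨hxS, hxP⟩
        obtain ⟨c, rfl⟩ := Submodule.mem_span_singleton.1 hxP
        rcases eq_or_ne c 0 with rfl | hc
        · simp
        · exfalso
          apply haS
          have h4 := S.smul_mem c⁻¹ hxS
          rwa [smul_smul, inv_mul_cancel₀ hc, one_smul] at h4
      have h5 := Submodule.finrank_sup_add_finrank_inf_eq S (span F {a})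
      rw [hinf, finrank_bot, hP, hSr] at h5
      rw [hAn]
      omega
  have hspanA : span F (Set.range (av e f)) = A := by
    apply le_antisymm
    · rw [span_le]
      rintro x ⟨k, rfl⟩
      rcases k with i | (i | u0)
      · rw [hav1]; exact (he1AJ i).1
      · rw [hav2]; exact huA i
      · rw [hav3]; exact haA
    · rw [← hA_eq, ← hsup]
      apply sup_le (sup_le ?_ ?_) ?_
      · rw [← he1_span]
        apply span_mono
        rintro x ⟨i, rfl⟩
        exact ⟨Sum.inl i, hav1 i⟩
      · rw [← hu_span]
        apply span_mono
        rintro x ⟨i, rfl⟩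
        exact ⟨Sum.inr (Sum.inl i), hav2 i⟩
      · rw [Submodule.span_singleton_le_iff_mem]
        exact subset_span ⟨Sum.inr (Sum.inr ()), hav3 ()⟩
  exact ⟨⟨e, f, he_span, hqf, hpff, hpef, hspanA⟩⟩


end Exists


end SigmaOrbitAux

/-- `A` belongs to the collection `Σ`: an `n`-dimensional subspace of `W` on
which the polar form vanishes identically and whose set of singular vectors is
a linear subspace of codimension `1`. -/
def InSigmaSet {F W : Type*} [Field F] [AddCommGroup W] [Module F W]
    (n : ℕ) (Q : QuadraticForm F W) (A : Submodule F W) : Prop :=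
  Module.finrank F A = n ∧
    (∀ x ∈ A, ∀ y ∈ A, QuadraticMap.polar (⇑Q) x y = 0) ∧
    ∃ S : Submodule F W, (S : Set W) = {x : W | x ∈ A ∧ Q x = 0} ∧
      Module.finrank F S + 1 = Module.finrank F A

/-- Two members `A`, `B` of `Σ` are in the same orbit of the parabolic subgroup
`P` (the stabilizer of `J` in the orthogonal group of `Q`) if and only if they
have the same `J`-indicator `dim (A ∩ J)`. -/
theorem sigma_same_parabolic_orbit_iff_J_indicator_eq
    {F W : Type*} [Field F] [PerfectField F] [CharP F 2]
    [AddCommGroup W] [Module F W] [FiniteDimensional F W]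
    (n : ℕ) (hW : Module.finrank F W = 2 * n)
    (Q : QuadraticForm F W)
    (hnd : ∀ x : W, (∀ y : W, QuadraticMap.polar (⇑Q) x y = 0) → x = 0)
    (J K : Submodule F W) (hJK : IsCompl J K)
    (hJ : Module.finrank F J = n) (hK : Module.finrank F K = n)
    (hQJ : ∀ x ∈ J, Q x = 0) (hQK : ∀ x ∈ K, Q x = 0)
    (A B : Submodule F W) (hA : InSigmaSet n Q A) (hB : InSigmaSet n Q B) :
    (∃ g : W ≃ₗ[F] W, (∀ x : W, Q (g x) = Q x) ∧
        Submodule.map (g : W →ₗ[F] W) J = J ∧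
        Submodule.map (g : W →ₗ[F] W) A = B) ↔
      Module.finrank F ↥(A ⊓ J) = Module.finrank F ↥(B ⊓ J) := by
  classical
  constructor
  · rintro ⟨g, hQg, hgJ, hgA⟩
    have hinj : Function.Injective (g : W →ₗ[F] W) := g.injective
    have h1 : Submodule.map (g : W →ₗ[F] W) (A ⊓ J) = B ⊓ J := by
      rw [Submodule.map_inf _ hinj, hgA, hgJ]
    have h2 := LinearEquiv.finrank_map_eq g (A ⊓ J)
    rw [← h1, h2]
  · intro h
    obtain ⟨hAn, hApolar, S, hSset, hSrank⟩ := hA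
    obtain ⟨hBn, hBpolar, S', hS'set, hS'rank⟩ := hB
    set jn := Module.finrank F ↥(A ⊓ J) with hjn_def
    have hAJS : A ⊓ J ≤ S := by
      intro x hx
      show x ∈ (S : Set W)
      rw [hSset]
      exact ⟨hx.1, hQJ x hx.2⟩
    have hjnle : jn ≤ Module.finrank F ↥S := Submodule.finrank_mono hAJS
    set m := n - 1 - jn with hm_def
    have hm : jn + m + 1 = n := by omega
    obtain ⟨FA⟩ := SigmaOrbitAux.exists_frame hW Q hnd J K hJK hJ hK hQJ hQK A
      hAn hApolar S hSset hSrank rfl hm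
    obtain ⟨FB⟩ := SigmaOrbitAux.exists_frame hW Q hnd J K hJK hJ hK hQJ hQK B
      hBn hBpolar S' hS'set hS'rank h.symm hm
    exact SigmaOrbitAux.frame_glue hW hm hQJ FA FB
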